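/- If λcr² ≤ 1/η then ∂Δ̂/∂A|_{A=0} = 1 - λcr²η ≥ 0, and since lim_{A→∞} ∂Δ̂/∂A = 1 > 0 and the derivative formula is ∂Δ̂/∂A = 1 - λcr²η/((1+Aηp)² - λcr²Aη²p), the mean peak AoI Δ̂(A) = A + 1/(ηp(A)) is nondecreasing in A on [0,∞); hence the optimal age threshold is A* = 0 and the optimal mean peak AoI equals exp(λcr²η + θr^α/ρ)/η. -/

import Mathlib

set_option maxHeartbeats 1600000 in
/-- if λcr² ≤ 1/η, the mean peak AoI Δ̂(A) = A + 1/(η·p(A)) is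
nondecreasing in A on [0,∞); hence the optimal age threshold is A* = 0 and the
optimal mean peak AoI equals exp(λcr²η + θr^α/ρ)/η. -/
theorem stmt_15 (lam c r η θ α ρ : ℝ)
    (hlam : 0 < lam) (hc : 0 < c) (hr : 0 < r) (hη : η ∈ Set.Ioc (0:ℝ) 1)
    (hθ : 0 < θ) (hα : 0 < α) (hρ : 0 < ρ)
    (P : ℝ → ℝ)
    (hPmem : ∀ a : ℝ, 0 ≤ a → P a ∈ Set.Ioc (0:ℝ) 1)
    (hPfix : ∀ a : ℝ, 0 ≤ a →
      P a = Real.exp (-(lam * c * r ^ 2 * η) / (1 + a * η * P a) - θ * r ^ α / ρ))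
    (hstab : ∀ a : ℝ, 0 ≤ a →
      0 < (1 + a * η * P a) ^ 2 - lam * c * r ^ 2 * a * η ^ 2 * P a)
    (hcond : lam * c * r ^ 2 ≤ 1 / η) :
    MonotoneOn (fun a => a + 1 / (η * P a)) (Set.Ici (0:ℝ)) ∧
    (∀ a : ℝ, 0 ≤ a → (0:ℝ) + 1 / (η * P 0) ≤ a + 1 / (η * P a)) ∧
    (0:ℝ) + 1 / (η * P 0)
      = Real.exp (lam * c * r ^ 2 * η + θ * r ^ α / ρ) / η := by
  obtain ⟨hη0, hη1⟩ := hη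
  set L : ℝ := lam * c * r ^ 2 * η with hLdef
  set K : ℝ := θ * r ^ α / ρ with hKdef
  have hL0 : 0 < L := by positivity
  have hL1 : L ≤ 1 := by
    have h := mul_le_mul_of_nonneg_right hcond hη0.le
    have h2 : 1 / η * η = 1 := by field_simp
    rw [h2] at h; exact h
  -- key monotonicity step
  have key : ∀ a b : ℝ, 0 ≤ a → a ≤ b →
      a + 1 / (η * P a) ≤ b + 1 / (η * P b) := by
    intro a b ha hab
    have hb : 0 ≤ b := ha.trans hab
    obtain ⟨hp0, hp1⟩ := hPmem a ha
    obtain ⟨hq0, hq1⟩ := hPmem b hb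
    set p : ℝ := P a
    set q : ℝ := P b
    rcases le_or_gt q p with hle | hpq
    · have h1 : 1 / (η * p) ≤ 1 / (η * q) :=
        one_div_le_one_div_of_le (mul_pos hη0 hq0)
          (mul_le_mul_of_nonneg_left hle hη0.le)
      linarith
    · set u : ℝ := 1 + a * η * p with hudef
      set v : ℝ := 1 + b * η * q with hvdef
      have hu1 : (1:ℝ) ≤ u := by
        have h := mul_nonneg (mul_nonneg ha hη0.le) hp0.le
        rw [hudef]; linarith
      have hv1 : (1:ℝ) ≤ v := by
        have h := mul_nonneg (mul_nonneg hb hη0.le) hq0.le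
        rw [hvdef]; linarith
      have hu0 : (0:ℝ) < u := by linarith
      have hv0 : (0:ℝ) < v := by linarith
      have hlogp : Real.log p = -L / u - K := by
        have := hPfix a ha
        rw [show P a = p from rfl] at this
        rw [this, Real.log_exp]
      have hlogq : Real.log q = -L / v - K := by
        have := hPfix b hb
        rw [show P b = q from rfl] at this
        rw [this, Real.log_exp]
      have hlogdiff : Real.log q - Real.log p = L / u - L / v := by
        rw [hlogp, hlogq]; ring
      -- (1) q - p ≤ q * (log q - log p)
      have h1 : q - p ≤ q * (Real.log q - Real.log p) := by
        have hlg := Real.log_le_sub_one_of_pos (div_pos hp0 hq0)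
        rw [Real.log_div hp0.ne' hq0.ne'] at hlg
        have e : q * (p / q - 1) = p - q := by field_simp
        linarith [mul_le_mul_of_nonneg_left hlg hq0.le]
      -- (2) q ≤ p * v
      have hB : q ≤ p * v := by
        have hqe : q = p * Real.exp (Real.log q - Real.log p) := by
          rw [Real.exp_sub, Real.exp_log hq0, Real.exp_log hp0]
          field_simp
        have hexpo : L / u - L / v ≤ Real.log v := by
          have s1 : L / u ≤ L := div_le_self hL0.le hu1
          have s2 : L - L / v = L * (v - 1) / v := by field_simp
          have s3 : L * (v - 1) / v ≤ (v - 1) / v := by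
            rw [div_le_div_iff₀ hv0 hv0]
            nlinarith [mul_nonneg (mul_nonneg (sub_nonneg.mpr hL1)
              (by linarith : (0:ℝ) ≤ v - 1)) hv0.le]
          have s4 : (v - 1) / v ≤ Real.log v := by
            have := Real.log_le_sub_one_of_pos (show (0:ℝ) < 1 / v by positivity)
            rw [Real.log_div one_ne_zero hv0.ne', Real.log_one] at this
            have e2 : 1 / v - 1 = -((v - 1) / v) := by field_simp; ring
            rw [e2] at this
            linarith
          calc L / u - L / v ≤ L - L / v := by linarith
            _ = L * (v - 1) / v := s2
            _ ≤ (v - 1) / v := s3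
            _ ≤ Real.log v := s4
        calc q = p * Real.exp (Real.log q - Real.log p) := hqe
          _ ≤ p * Real.exp (Real.log v) := by
              apply mul_le_mul_of_nonneg_left _ hp0.le
              exact Real.exp_le_exp.mpr (by rw [hlogdiff]; exact hexpo)
          _ = p * v := by rw [Real.exp_log hv0]
      have hBL : L * q ≤ p * v := by nlinarith
      -- (3) (q - p) * (u * v) ≤ L * q * (v - u)
      have h1' : q - p ≤ q * (L / u - L / v) := by rw [← hlogdiff]; exact h1
      have hA : (q - p) * (u * v) ≤ L * q * (v - u) := by
        have hmul := mul_le_mul_of_nonneg_right h1' (by positivity : (0:ℝ) ≤ u * v)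
        have e : q * (L / u - L / v) * (u * v) = L * q * (v - u) := by
          field_simp
        linarith [e ▸ hmul]
      -- combine to get q - p ≤ (b - a) * η * p * q
      have hvu : v - u = (b - a) * η * q + a * η * (q - p) := by
        rw [hudef, hvdef]; ring
      have habs : L * q * (a * η * (q - p)) ≤ p * v * (a * η * (q - p)) :=
        mul_le_mul_of_nonneg_right hBL
          (mul_nonneg (mul_nonneg ha hη0.le) (by linarith))
      have e1 : L * q * (v - u) = L * q * ((b - a) * η * q) + L * q * (a * η * (q - p)) := by
        rw [hvu]; ring
      have e2 : (q - p) * (u * v) = (q - p) * v + p * v * (a * η * (q - p)) := by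
        rw [hudef]; ring
      have hstep : (q - p) * v ≤ L * (b - a) * η * q * q := by
        linarith [hA, habs, e1, e2]
      have hmain : q - p ≤ (b - a) * η * p * q := by
        have h5 := mul_le_mul_of_nonneg_left hBL
          (mul_nonneg (mul_nonneg (by linarith : (0:ℝ) ≤ b - a) hη0.le) hq0.le)
        have h6 : (q - p) * v ≤ ((b - a) * η * p * q) * v := by linarith [hstep, h5]
        exact le_of_mul_le_mul_right h6 hv0
      have hfin : 1 / (η * p) - 1 / (η * q) ≤ b - a := by
        have e : 1 / (η * p) - 1 / (η * q) = (q - p) / (η * p * q) := by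
          field_simp
        rw [e, div_le_iff₀ (by positivity)]
        linarith [hmain]
      linarith
  refine ⟨fun a ha b hb hab => key a b ha hab, fun a ha => key 0 a le_rfl ha, ?_⟩
  have hP0 : P 0 = Real.exp (-(L + K)) := by
    have h := hPfix 0 le_rfl
    rw [h]
    congr 1
    have : (0:ℝ) * η * P 0 = 0 := by ring
    rw [this]
    ring
  rw [hP0, Real.exp_neg]
  field_simp
  ring
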